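/- arXiv:0901.0055 — 3 statements merged into one kernel-verified Lean document; each statement's English description precedes it below -/
import Mathlib

section
/- Let A, B1,…,Bk be finite subsets of an abelian group G. Then for any D ⊆ B1+⋯+Bk: |A+D|^k ≤ |D|^{k−1} · ∏_{i=1}^k |A+B_i|. -/
open Finset Pointwise
open scoped NNRat

namespace GMRAux


/-- Harmonic number as a nonneg rational. -/
def harm (s : ℕ) : ℚ≥0 := ∑ n ∈ range s, 1 / (n + 1)

lemma harm_mono : Monotone harm := by
  intro a b hab
  exact Finset.sum_le_sum_of_subset (range_subset_range.2 hab)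

lemma harm_sub_block {t s : ℕ} (h : t ≤ s) :
    harm s = harm t + ∑ n ∈ Ico t s, (1 : ℚ≥0) / ((n : ℚ≥0) + 1) := by
  unfold harm
  rw [range_eq_Ico, range_eq_Ico, Finset.sum_Ico_consecutive _ (Nat.zero_le t) h]

lemma harm_block {t s : ℕ} (h : t ≤ s) :
    harm t + ((s - t : ℕ) : ℚ≥0) / (s : ℚ≥0) ≤ harm s := by
  rw [harm_sub_block h]
  refine add_le_add_right ?_ _
  calc ((s - t : ℕ) : ℚ≥0) / (s : ℚ≥0)
      = ∑ _n ∈ Ico t s, (1 : ℚ≥0) / (s : ℚ≥0) := by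
        rw [Finset.sum_const, Nat.card_Ico, nsmul_eq_mul, mul_one_div]
    _ ≤ ∑ n ∈ Ico t s, (1 : ℚ≥0) / ((n : ℚ≥0) + 1) := by
        refine Finset.sum_le_sum fun n hn => ?_
        rcases Nat.eq_zero_or_pos s with rfl | hs
        · simp
        have hn' : n + 1 ≤ s := (mem_Ico.1 hn).2
        refine div_le_div_of_nonneg_left (by norm_num) ?_ ?_
        · exact_mod_cast Nat.succ_pos n
        · exact_mod_cast hn'

lemma harm_two_pow (j : ℕ) : harm (2 ^ j) ≤ (j : ℚ≥0) + 1 := by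
  induction j with
  | zero => simp [harm]
  | succ j ih =>
      have h2 : (2:ℕ) ^ j ≤ 2 ^ (j + 1) := Nat.pow_le_pow_right (by norm_num) (by omega)
      rw [harm_sub_block h2]
      have hpos : (0:ℕ) < 2 ^ j := Nat.pow_pos (by norm_num)
      have hblock : ∑ n ∈ Ico ((2:ℕ) ^ j) (2 ^ (j + 1)), (1 : ℚ≥0) / ((n : ℚ≥0) + 1) ≤ 1 := by
        calc ∑ n ∈ Ico ((2:ℕ) ^ j) (2 ^ (j + 1)), (1 : ℚ≥0) / ((n : ℚ≥0) + 1)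
            ≤ ∑ _n ∈ Ico ((2:ℕ) ^ j) (2 ^ (j + 1)), (1 : ℚ≥0) / (((2:ℕ) ^ j : ℕ) : ℚ≥0) := by
              refine Finset.sum_le_sum fun n hn => ?_
              have hn' : (2:ℕ) ^ j ≤ n := (mem_Ico.1 hn).1
              refine div_le_div_of_nonneg_left (by norm_num) (by exact_mod_cast hpos) ?_
              have h3 : (2:ℕ)^j ≤ n + 1 := le_trans hn' (Nat.le_succ n)
              exact_mod_cast h3
          _ = (((2:ℕ) ^ (j+1) - 2 ^ j : ℕ) : ℚ≥0) / (((2:ℕ) ^ j : ℕ) : ℚ≥0) := by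
              rw [Finset.sum_const, Nat.card_Ico, nsmul_eq_mul, mul_one_div]
          _ ≤ 1 := by
              rw [div_le_one (by exact_mod_cast hpos)]
              have h4 : (2:ℕ) ^ (j+1) - 2 ^ j = 2 ^ j := by
                rw [pow_succ]; omega
              rw [h4]
      calc harm (2 ^ j) + ∑ n ∈ Ico ((2:ℕ) ^ j) (2 ^ (j + 1)), (1 : ℚ≥0) / ((n : ℚ≥0) + 1)
          ≤ ((j : ℚ≥0) + 1) + 1 := add_le_add ih hblock
        _ = ((j:ℚ≥0) + 1) + 1 := rfl
        _ = (((j+1 : ℕ)) : ℚ≥0) + 1 := by push_cast; ring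

lemma harm_le_of_le_two_pow {s j : ℕ} (h : s ≤ 2 ^ j) : harm s ≤ (j : ℚ≥0) + 1 :=
  le_trans (harm_mono h) (harm_two_pow j)



variable {H : Type*} [AddCommGroup H] [DecidableEq H]

/-- `m`-fold iterated pointwise sumset. -/
def iterAdd (B : Finset H) : ℕ → Finset H
  | 0 => {0}
  | m + 1 => B + iterAdd B m

lemma add_iterAdd_succ (X B : Finset H) (m : ℕ) :
    X + iterAdd B (m + 1) = X + B + iterAdd B m := by
  rw [iterAdd, ← add_assoc, add_comm X B, add_assoc, ← add_assoc]

lemma add_iterAdd_zero (X B : Finset H) : X + iterAdd B 0 = X := by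
  simp [iterAdd, add_singleton]

/-- Plünnecke–Petridis chain: for `X` a ratio-minimizer w.r.t. `B`. -/
lemma pp_chain (X B : Finset H)
    (hPP : ∀ X' ⊆ X, #(X + B) * #X' ≤ #(X' + B) * #X) (m : ℕ) :
    #(X + iterAdd B m) * #X ^ m ≤ #(X + B) ^ m * #X := by
  induction m with
  | zero => simp [add_iterAdd_zero]
  | succ m ih =>
      have h1 : #(X + B + iterAdd B m) * #X ≤ #(X + B) * #(X + iterAdd B m) :=
        by have h0 := pluennecke_petridis_inequality_add (iterAdd B m) hPP
           rw [add_comm (iterAdd B m) X, add_right_comm X (iterAdd B m) B] at h0; exact h0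
      calc #(X + iterAdd B (m+1)) * #X ^ (m+1)
          = (#(X + B + iterAdd B m) * #X) * #X ^ m := by
            rw [add_iterAdd_succ]; ring
        _ ≤ (#(X + B) * #(X + iterAdd B m)) * #X ^ m :=
            Nat.mul_le_mul_right _ h1
        _ = #(X + B) * (#(X + iterAdd B m) * #X ^ m) := by ring
        _ ≤ #(X + B) * (#(X + B) ^ m * #X) := Nat.mul_le_mul_left _ ih
        _ = #(X + B) ^ (m+1) * #X := by ring

/-- Per-piece bound: a ratio-minimizer `X` satisfies `|X+D| ≤ d^(k-1) |X+B|`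
whenever `D ⊆ kB` and `|D| ≤ d^k`. -/
lemma piece_bound (X B D : Finset H) (hX : X.Nonempty)
    (hPP : ∀ X' ⊆ X, #(X + B) * #X' ≤ #(X' + B) * #X)
    (k d : ℕ) (hk : 1 ≤ k) (hD : D ⊆ iterAdd B k) (hDcard : #D ≤ d ^ k) :
    #(X + D) ≤ d ^ (k - 1) * #(X + B) := by
  have hx : 0 < #X := card_pos.2 hX
  have hchain : #(X + D) * #X ^ k ≤ #(X + B) ^ k * #X :=
    le_trans (Nat.mul_le_mul_right _ (card_le_card (add_subset_add_left hD)))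
      (pp_chain X B hPP k)
  have htriv : #(X + D) ≤ #X * d ^ k :=
    le_trans card_add_le (Nat.mul_le_mul_left _ hDcard)
  obtain ⟨k', rfl⟩ : ∃ k', k = k' + 1 := ⟨k - 1, (Nat.succ_pred_eq_of_pos hk).symm⟩
  simp only [Nat.add_sub_cancel]
  rcases le_or_gt (d * #X) (#(X + B)) with h | h
  · calc #(X + D) ≤ #X * d ^ (k' + 1) := htriv
      _ = d ^ k' * (d * #X) := by ring
      _ ≤ d ^ k' * #(X + B) := Nat.mul_le_mul_left _ h
  · have h2 : #(X + D) * #X ^ (k' + 1) ≤ (d ^ k' * #(X + B)) * #X ^ (k' + 1) := by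
      calc #(X + D) * #X ^ (k' + 1) ≤ #(X + B) ^ (k' + 1) * #X := hchain
        _ = #(X + B) ^ k' * #(X + B) * #X := by ring
        _ ≤ (d * #X) ^ k' * #(X + B) * #X := by
            have := Nat.pow_le_pow_left h.le k'
            exact Nat.mul_le_mul_right _ (Nat.mul_le_mul_right _ this)
        _ = (d ^ k' * #(X + B)) * #X ^ (k' + 1) := by ring
    exact Nat.le_of_mul_le_mul_right h2 (Nat.pow_pos hx)



variable {H : Type*} [AddCommGroup H] [DecidableEq H]



/-- Membership in a pointwise sum of a family of finsets: selector extraction. -/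
lemma exists_selector {ι : Type*} [DecidableEq ι] (s : Finset ι) (f : ι → Finset H) (x : H)
    (hx : x ∈ ∑ i ∈ s, f i) : ∃ g : ι → H, (∀ i ∈ s, g i ∈ f i) ∧ ∑ i ∈ s, g i = x := by
  induction s using Finset.induction_on generalizing x with
  | empty =>
      refine ⟨fun _ => 0, by simp, ?_⟩
      simpa [Finset.sum_empty] using (by simpa using hx : x = 0).symm
  | @insert a s ha ih =>
      rw [Finset.sum_insert ha] at hx
      rw [Finset.mem_add] at hx
      obtain ⟨y, hy, z, hz, hyz⟩ := hx
      obtain ⟨g, hg, hgsum⟩ := ih z hz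
      refine ⟨Function.update g a y, ?_, ?_⟩
      · intro i hi
        rcases Finset.mem_insert.1 hi with rfl | hi'
        · simpa using hy
        · have : i ≠ a := by rintro rfl; exact ha hi'
          simpa [Function.update_of_ne this] using hg i hi'
      · rw [Finset.sum_insert ha, Function.update_self]
        have : ∑ i ∈ s, Function.update g a y i = ∑ i ∈ s, g i := by
          refine Finset.sum_congr rfl fun i hi => ?_
          have : i ≠ a := by rintro rfl; exact ha hi
          simp [Function.update_of_ne this]
        rw [this, hgsum, hyz]

/-- Converse: a selector witnesses membership. -/
lemma mem_finset_sum_of_selector {ι : Type*} (s : Finset ι) (f : ι → Finset H) (g : ι → H)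
    (hg : ∀ i ∈ s, g i ∈ f i) : ∑ i ∈ s, g i ∈ ∑ i ∈ s, f i := by
  classical
  induction s using Finset.induction_on with
  | empty => simp
  | @insert a s ha ih =>
      rw [Finset.sum_insert ha, Finset.sum_insert ha]
      exact Finset.mem_add.2 ⟨g a, hg a (Finset.mem_insert_self a s),
        ∑ i ∈ s, g i, ih fun i hi => hg i (Finset.mem_insert_of_mem hi), rfl⟩

/-- A sum of finsets each contained in `T` is contained in the iterated sumset of `T`. -/
lemma sum_subset_iterAdd {ι : Type*} (s : Finset ι) (f : ι → Finset H) (T : Finset H)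
    (hf : ∀ i ∈ s, f i ⊆ T) : (∑ i ∈ s, f i) ⊆ iterAdd T #s := by
  classical
  induction s using Finset.induction_on with
  | empty =>
      intro x hx
      rw [Finset.sum_empty, Finset.mem_zero] at hx
      simp [iterAdd, hx]
  | @insert a s ha ih =>
      rw [Finset.sum_insert ha, Finset.card_insert_of_notMem ha]
      exact add_subset_add (hf a (Finset.mem_insert_self a s))
        (ih fun i hi => hf i (Finset.mem_insert_of_mem hi))

/-- Pointwise addition of product finsets. -/
lemma piFinset_add {ι : Type*} [DecidableEq ι] [Fintype ι] {G : ι → Type*}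
    [∀ i, DecidableEq (G i)] [∀ i, Add (G i)] (f g : ∀ i, Finset (G i)) :
    Fintype.piFinset f + Fintype.piFinset g = Fintype.piFinset (fun i => f i + g i) := by
  ext x
  simp only [Finset.mem_add, Fintype.mem_piFinset]
  constructor
  · rintro ⟨y, hy, z, hz, rfl⟩ i
    exact ⟨y i, hy i, z i, hz i, rfl⟩
  · intro hx
    choose y hy z hz hyz using hx
    exact ⟨y, hy, z, hz, funext hyz⟩







/-- The peeling lemma. -/
lemma peel (B D : Finset H) (k d : ℕ) (hk : 1 ≤ k)
    (hD : D ⊆ iterAdd B k) (hDcard : #D ≤ d ^ k) :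
    ∀ (n : ℕ) (S : Finset H), #S ≤ n →
      (#(S + D) : ℚ≥0) ≤ (d ^ (k - 1) : ℕ) * #(S + B) * harm #S := by
  intro n
  induction n with
  | zero =>
      intro S hS
      have : S = ∅ := card_eq_zero.1 (Nat.le_zero.1 hS)
      subst this
      simp [empty_add]
  | succ n ih =>
      intro S hS
      rcases S.eq_empty_or_nonempty with rfl | hSne
      · simp [empty_add]
      -- extract the minimizer
      have hS' : S ∈ S.powerset.erase ∅ :=
        mem_erase_of_ne_of_mem hSne.ne_empty (mem_powerset_self _)
      obtain ⟨X, hXmem, hXmin⟩ :=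
        exists_min_image (S.powerset.erase ∅) (fun Y => (#(Y + B) : ℚ≥0) / #Y) ⟨S, hS'⟩
      rw [mem_erase, mem_powerset, ← nonempty_iff_ne_empty] at hXmem
      obtain ⟨hXne, hXS⟩ := hXmem
      have hXpos : (0 : ℚ≥0) < #X := by exact_mod_cast card_pos.2 hXne
      have hSpos : (0 : ℚ≥0) < #S := by exact_mod_cast card_pos.2 hSne
      -- PP hypothesis for X
      have hPP : ∀ X' ⊆ X, #(X + B) * #X' ≤ #(X' + B) * #X := by
        intro X' hX'
        rcases X'.eq_empty_or_nonempty with rfl | hX'ne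
        · simp
        have hX'pos : (0 : ℚ≥0) < #X' := by exact_mod_cast card_pos.2 hX'ne
        have hmem : X' ∈ S.powerset.erase ∅ :=
          mem_erase_of_ne_of_mem hX'ne.ne_empty (mem_powerset.2 (hX'.trans hXS))
        have := hXmin X' hmem
        rw [div_le_div_iff₀ hXpos hX'pos] at this
        exact_mod_cast this
      -- minimality against S itself
      have hminS : (#(X + B) : ℚ≥0) * #S ≤ (#(S + B) : ℚ≥0) * #X := by
        have := hXmin S hS'
        rw [div_le_div_iff₀ hXpos hSpos] at this
        exact_mod_cast this
      -- piece bound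
      have hpiece : #(X + D) ≤ d ^ (k - 1) * #(X + B) :=
        piece_bound X B D hXne hPP k d hk hD hDcard
      -- the rest
      set T := S \ X with hT
      have hTcard : #T = #S - #X := card_sdiff_of_subset hXS
      have hXle : #X ≤ #S := card_le_card hXS
      have hXpos' : 0 < #X := card_pos.2 hXne
      have hTn : #T ≤ n := by omega
      have hIH := ih T hTn
      -- union bound
      have hsplit : #(S + D) ≤ #(X + D) + #(T + D) := by
        have hcover : S + D ⊆ (X + D) ∪ (T + D) := by
          have : S = X ∪ T := by
            rw [hT, union_sdiff_of_subset hXS]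
          rw [this, union_add]
        exact le_trans (card_le_card hcover) (card_union_le _ _)
      have hTB : (#(T + B) : ℚ≥0) ≤ (#(S + B) : ℚ≥0) := by
        exact_mod_cast card_le_card (add_subset_add_right (sdiff_subset))
      -- assemble in ℚ≥0
      have hXB : (#(X + B) : ℚ≥0) ≤ (#(S + B) : ℚ≥0) * #X / #S := by
        rw [le_div_iff₀ hSpos]; exact hminS
      have hXD : (#(X + D) : ℚ≥0) ≤ (d ^ (k - 1) : ℕ) * ((#(S + B) : ℚ≥0) * #X / #S) := by
        calc (#(X + D) : ℚ≥0) ≤ ((d ^ (k - 1) * #(X + B) : ℕ) : ℚ≥0) := by exact_mod_cast hpiece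
          _ = (d ^ (k - 1) : ℕ) * (#(X + B) : ℚ≥0) := by push_cast; ring
          _ ≤ (d ^ (k - 1) : ℕ) * ((#(S + B) : ℚ≥0) * #X / #S) := by
              exact mul_le_mul_right hXB _
      have hkey : (#X : ℚ≥0) / #S + harm #T ≤ harm #S := by
        have h1 : ((#S - #T : ℕ) : ℚ≥0) = (#X : ℚ≥0) := by
          have h2 : #S - #T = #X := by omega
          exact_mod_cast congrArg (Nat.cast : ℕ → ℚ≥0) h2
        have h3 := harm_block (t := #T) (s := #S) (by omega)
        rw [h1] at h3
        rw [add_comm]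
        exact h3
      calc (#(S + D) : ℚ≥0) ≤ (#(X + D) : ℚ≥0) + (#(T + D) : ℚ≥0) := by exact_mod_cast hsplit
        _ ≤ (d ^ (k - 1) : ℕ) * ((#(S + B) : ℚ≥0) * #X / #S)
            + (d ^ (k - 1) : ℕ) * #(T + B) * harm #T := add_le_add hXD hIH
        _ ≤ (d ^ (k - 1) : ℕ) * ((#(S + B) : ℚ≥0) * #X / #S)
            + (d ^ (k - 1) : ℕ) * #(S + B) * harm #T :=
              add_le_add_right (mul_le_mul_left (mul_le_mul_right hTB _) _) _
        _ = (d ^ (k - 1) : ℕ) * #(S + B) * ((#X : ℚ≥0) / #S + harm #T) := by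
            rw [mul_add, mul_div_assoc, ← mul_assoc]
        _ ≤ (d ^ (k - 1) : ℕ) * #(S + B) * harm #S := mul_le_mul_right hkey _







/-- The κ-lossy instance inequality. -/
lemma instance_bound {G : Type*} [AddCommGroup G] [DecidableEq G] {k : ℕ} (hk : 1 ≤ k)
    (A : Finset G) (B : Fin k → Finset G) (D : Finset G) (hD : D ⊆ ∑ i, B i)
    (j : ℕ) (hj : #A ^ k ≤ 2 ^ j) :
    ((#(A + D) : ℚ≥0)) ^ k ≤
      (#D : ℚ≥0) ^ (k - 1) * ((k : ℚ≥0) * ∏ i, (#(A + B i) : ℚ≥0)) * ((j : ℚ≥0) + 1) := by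
  haveI : NeZero k := ⟨by omega⟩
  set H := Fin k → G
  set 𝒜 : Finset H := Fintype.piFinset (fun _ => A) with h𝒜
  set 𝒟 : Finset H := Fintype.piFinset (fun _ => D) with h𝒟
  set P : Fin k → Finset H := fun j => Fintype.piFinset (fun c => B (c + j)) with hP
  set ℬ : Finset H := Finset.univ.biUnion P with hℬ
  -- (iii) 𝒟 ⊆ ∑ j, P j
  have h3 : 𝒟 ⊆ ∑ j : Fin k, P j := by
    intro x hx
    rw [h𝒟, Fintype.mem_piFinset] at hx
    have hsel : ∀ c : Fin k, ∃ g : Fin k → G, (∀ i, g i ∈ B i) ∧ ∑ i, g i = x c := by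
      intro c
      obtain ⟨g, hg, hgs⟩ := exists_selector Finset.univ B (x c) (hD (hx c))
      exact ⟨g, fun i => hg i (Finset.mem_univ i), hgs⟩
    choose b hb hbs using hsel
    have hw : ∀ j : Fin k, (fun c => b c (c + j)) ∈ P j := by
      intro j
      rw [hP, Fintype.mem_piFinset]
      exact fun c => hb c (c + j)
    have hsum : (∑ j : Fin k, fun c => b c (c + j)) = x := by
      funext c
      rw [Finset.sum_apply]
      calc ∑ j : Fin k, b c (c + j) = ∑ i : Fin k, b c i := by
            exact Fintype.sum_equiv (Equiv.addLeft c) _ _ (fun i => rfl)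
        _ = x c := hbs c
    have := mem_finset_sum_of_selector Finset.univ P (fun j => fun c => b c (c + j))
      (fun j _ => hw j)
    rwa [hsum] at this
  -- (iv) ∑ j, P j ⊆ iterAdd ℬ k
  have h4 : (∑ j : Fin k, P j) ⊆ iterAdd ℬ k := by
    have := sum_subset_iterAdd Finset.univ P ℬ
      (fun i _ => Finset.subset_biUnion_of_mem P (Finset.mem_univ i))
    simpa using this
  have h𝒟ℬ : 𝒟 ⊆ iterAdd ℬ k := h3.trans h4
  -- cards
  have hcard𝒟 : #𝒟 = #D ^ k := by
    rw [h𝒟, Fintype.card_piFinset]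
    simp
  have hcard𝒜 : #𝒜 = #A ^ k := by
    rw [h𝒜, Fintype.card_piFinset]
    simp
  have hcard𝒜𝒟 : #(𝒜 + 𝒟) = #(A + D) ^ k := by
    rw [h𝒜, h𝒟, piFinset_add, Fintype.card_piFinset]
    simp
  have hcard𝒜P : ∀ j : Fin k, #(𝒜 + P j) = ∏ i, #(A + B i) := by
    intro j
    rw [h𝒜, hP, piFinset_add, Fintype.card_piFinset]
    exact Fintype.prod_equiv (Equiv.addRight j) _ _ (fun c => rfl)
  have hcard𝒜ℬ : #(𝒜 + ℬ) ≤ k * ∏ i, #(A + B i) := by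
    have hsub : 𝒜 + ℬ ⊆ Finset.univ.biUnion (fun j => 𝒜 + P j) := by
      intro x hx
      rw [Finset.mem_add] at hx
      obtain ⟨y, hy, z, hz, rfl⟩ := hx
      rw [hℬ, Finset.mem_biUnion] at hz
      obtain ⟨j, _, hz⟩ := hz
      exact Finset.mem_biUnion.2 ⟨j, Finset.mem_univ j,
        Finset.mem_add.2 ⟨y, hy, z, hz, rfl⟩⟩
    calc #(𝒜 + ℬ) ≤ ∑ j : Fin k, #(𝒜 + P j) :=
          le_trans (card_le_card hsub) (card_biUnion_le)
      _ = k * ∏ i, #(A + B i) := by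
          rw [Finset.sum_congr rfl (fun j _ => hcard𝒜P j)]
          simp [Finset.sum_const, mul_comm]
  -- peel
  have hpeel := peel ℬ 𝒟 k #D hk h𝒟ℬ (le_of_eq hcard𝒟) #𝒜 𝒜 le_rfl
  rw [hcard𝒜𝒟] at hpeel
  have hharm : harm #𝒜 ≤ (j : ℚ≥0) + 1 := by
    rw [hcard𝒜]
    exact harm_le_of_le_two_pow hj
  calc ((#(A + D) : ℚ≥0)) ^ k = ((#(A + D) ^ k : ℕ) : ℚ≥0) := by push_cast; ring
    _ ≤ (#D ^ (k - 1) : ℕ) * #(𝒜 + ℬ) * harm #𝒜 := hpeel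
    _ ≤ (#D ^ (k - 1) : ℕ) * ((k * ∏ i, #(A + B i) : ℕ) : ℚ≥0) * ((j : ℚ≥0) + 1) := by
        refine mul_le_mul ?_ hharm zero_le zero_le
        exact mul_le_mul_right (by exact_mod_cast hcard𝒜ℬ) _
    _ = (#D : ℚ≥0) ^ (k - 1) * ((k : ℚ≥0) * ∏ i, (#(A + B i) : ℚ≥0)) * ((j : ℚ≥0) + 1) := by
        push_cast; ring




/-- Per-tensor-power ℕ inequality. -/
lemma tensor_bound {G : Type*} [AddCommGroup G] [DecidableEq G] {k : ℕ} (hk : 1 ≤ k)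
    (A : Finset G) (B : Fin k → Finset G) (D : Finset G) (hD : D ⊆ ∑ i, B i) (m : ℕ)
    (_hm : 1 ≤ m) :
    (#(A + D)) ^ (k * m) ≤
      (#D ^ (k - 1) * ∏ i, #(A + B i)) ^ m * (k * (k * m * #A + 1)) := by
  set Am : Finset (Fin m → G) := Fintype.piFinset (fun _ => A) with hAm
  set Dm : Finset (Fin m → G) := Fintype.piFinset (fun _ => D) with hDm
  set Bm : Fin k → Finset (Fin m → G) := fun i => Fintype.piFinset (fun _ => B i) with hBm
  -- Dm ⊆ ∑ i, Bm i
  have hDBm : Dm ⊆ ∑ i, Bm i := by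
    intro x hx
    rw [hDm, Fintype.mem_piFinset] at hx
    have hsel : ∀ c : Fin m, ∃ g : Fin k → G, (∀ i, g i ∈ B i) ∧ ∑ i, g i = x c := by
      intro c
      obtain ⟨g, hg, hgs⟩ := exists_selector Finset.univ B (x c) (hD (hx c))
      exact ⟨g, fun i => hg i (Finset.mem_univ i), hgs⟩
    choose b hb hbs using hsel
    have hv : ∀ i : Fin k, (fun c => b c i) ∈ Bm i := by
      intro i
      rw [hBm, Fintype.mem_piFinset]
      exact fun c => hb c i
    have hsum : (∑ i : Fin k, fun c => b c i) = x := by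
      funext c
      rw [Finset.sum_apply]
      exact hbs c
    have := mem_finset_sum_of_selector Finset.univ Bm (fun i => fun c => b c i)
      (fun i _ => hv i)
    rwa [hsum] at this
  -- cards
  have hcardAmDm : #(Am + Dm) = #(A + D) ^ m := by
    rw [hAm, hDm, piFinset_add, Fintype.card_piFinset]; simp
  have hcardAm : #Am = #A ^ m := by rw [hAm, Fintype.card_piFinset]; simp
  have hcardDm : #Dm = #D ^ m := by rw [hDm, Fintype.card_piFinset]; simp
  have hcardABm : ∀ i, #(Am + Bm i) = #(A + B i) ^ m := by
    intro i
    rw [hAm, hBm, piFinset_add, Fintype.card_piFinset]; simp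
  -- the 2-power bound
  have h2pow : #Am ^ k ≤ 2 ^ (k * m * #A) := by
    rw [hcardAm, ← pow_mul]
    calc #A ^ (m * k) ≤ (2 ^ #A) ^ (m * k) :=
          Nat.pow_le_pow_left (le_of_lt Nat.lt_two_pow_self) _
      _ = 2 ^ (k * m * #A) := by rw [← pow_mul]; ring_nf
  have hQ := instance_bound hk Am Bm Dm hDBm (k * m * #A) h2pow
  rw [hcardAmDm, hcardDm] at hQ
  have hQ' : ((#(A + D) ^ m : ℚ≥0)) ^ k ≤
      ((#D:ℚ≥0) ^ m) ^ (k - 1) * ((k : ℚ≥0) * ∏ i, ((#(A + B i):ℚ≥0)) ^ m)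
        * ((k * m * #A : ℕ) + 1) := by
    have hprodeq : (∏ i, (#(Am + Bm i) : ℚ≥0)) = ∏ i, ((#(A + B i) : ℚ≥0)) ^ m := by
      refine Finset.prod_congr rfl fun i _ => ?_
      rw [hcardABm i]; push_cast; ring
    calc ((#(A + D) ^ m : ℚ≥0)) ^ k
        = (((#(A + D) ^ m : ℕ)) : ℚ≥0) ^ k := by push_cast; ring
      _ ≤ (((#D ^ m : ℕ)) : ℚ≥0) ^ (k - 1) * ((k : ℚ≥0) * ∏ i, (#(Am + Bm i) : ℚ≥0))
            * (((k * m * #A : ℕ) : ℚ≥0) + 1) := hQ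
      _ = ((#D:ℚ≥0) ^ m) ^ (k - 1) * ((k : ℚ≥0) * ∏ i, ((#(A + B i):ℚ≥0)) ^ m)
            * ((k * m * #A : ℕ) + 1) := by rw [hprodeq]; push_cast; ring
  -- cast down to ℕ
  have hfin : ((#(A + D) ^ (k * m) : ℕ) : ℚ≥0) ≤
      (((#D ^ (k - 1) * ∏ i, #(A + B i)) ^ m * (k * (k * m * #A + 1)) : ℕ) : ℚ≥0) := by
    calc ((#(A + D) ^ (k * m) : ℕ) : ℚ≥0)
        = ((#(A + D) : ℚ≥0) ^ m) ^ k := by push_cast; rw [← pow_mul]; ring_nf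
      _ ≤ ((#D:ℚ≥0) ^ m) ^ (k - 1) * ((k : ℚ≥0) * ∏ i, ((#(A + B i):ℚ≥0)) ^ m)
            * ((k * m * #A : ℕ) + 1) := hQ'
      _ = (((#D ^ (k - 1) * ∏ i, #(A + B i)) ^ m * (k * (k * m * #A + 1)) : ℕ) : ℚ≥0) := by
          have e1 : ((#D:ℚ≥0) ^ (k-1)) ^ m = (#D:ℚ≥0) ^ (m * (k-1)) := by
            rw [← pow_mul, Nat.mul_comm]
          push_cast
          rw [mul_pow, e1, ← Finset.prod_pow]
          ring
  exact_mod_cast hfin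



/-- Quadratic lower bound for `(1+x)^(m+1)`. -/
lemma qb (x : ℚ) (hx : 0 ≤ x) :
    ∀ m : ℕ, (2:ℚ) + 2*(m+1)*x + ((m+1)*m)*x^2 ≤ 2*(1+x)^(m+1) := by
  intro m
  induction m with
  | zero => push_cast; nlinarith [hx]
  | succ m ih =>
      have h1 : (0:ℚ) ≤ 1 + x := by linarith
      have h2 : (2:ℚ)*(1+x)^(m+1+1) = (2*(1+x)^(m+1))*(1+x) := by ring
      rw [h2]
      have h3 : ((2:ℚ) + 2*(m+1)*x + ((m+1)*m)*x^2) * (1+x) ≤ (2*(1+x)^(m+1))*(1+x) :=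
        mul_le_mul_of_nonneg_right ih h1
      refine le_trans ?_ h3
      have hm : (0:ℚ) ≤ (m:ℚ) := Nat.cast_nonneg m
      push_cast
      nlinarith [sq_nonneg x, pow_nonneg hx 3, mul_nonneg (mul_nonneg hm hx) hx,
        mul_nonneg (mul_nonneg (mul_nonneg hm hm) hx) (mul_nonneg hx hx)]

/-- Endgame: a linear-lossy family of power inequalities implies the exact inequality. -/
lemma endgame (Q R c₁ c₂ : ℕ) (hR : 1 ≤ R)
    (h : ∀ m : ℕ, 1 ≤ m → Q ^ m ≤ R ^ m * (c₁ * m + c₂)) : Q ≤ R := by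
  by_contra hQR
  push_neg at hQR
  have hQ : R + 1 ≤ Q := hQR
  -- natural-number inequality for every m
  have key : ∀ m : ℕ, (m+1) * m ≤ 2 * (c₁ * (m+1) + c₂) * R ^ 2 := by
    intro m
    have h1 : (R + 1) ^ (m+1) ≤ R ^ (m+1) * (c₁ * (m+1) + c₂) :=
      le_trans (Nat.pow_le_pow_left hQ _) (h (m+1) (by omega))
    -- move to ℚ
    have hRQ : (0:ℚ) < (R:ℚ) := by exact_mod_cast hR
    set x : ℚ := 1 / (R:ℚ) with hxdef
    have hx : (0:ℚ) ≤ x := by positivity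
    have hx1 : (1 + x) * (R:ℚ) = (R:ℚ) + 1 := by
      rw [hxdef]; field_simp
    have h2 : ((R:ℚ) + 1) ^ (m+1) ≤ (R:ℚ) ^ (m+1) * (c₁ * (m+1) + c₂) := by
      exact_mod_cast h1
    have h3 : (1 + x) ^ (m+1) ≤ (c₁ * (m+1) + c₂ : ℚ) := by
      have hRpow : (0:ℚ) < (R:ℚ) ^ (m+1) := by positivity
      have : (1 + x) ^ (m+1) * (R:ℚ) ^ (m+1) = ((R:ℚ) + 1) ^ (m+1) := by
        rw [← mul_pow, hx1]
      calc (1 + x) ^ (m+1) = ((R:ℚ) + 1) ^ (m+1) / (R:ℚ) ^ (m+1) := by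
            rw [← this]; field_simp
        _ ≤ ((R:ℚ) ^ (m+1) * (c₁ * (m+1) + c₂)) / (R:ℚ) ^ (m+1) := by
            gcongr
        _ = (c₁ * (m+1) + c₂ : ℚ) := by field_simp
    have h4 : (((m:ℚ)+1)*m) * x^2 ≤ 2 * (c₁ * (m+1) + c₂ : ℚ) := by
      have := qb x hx m
      nlinarith [this, h3, mul_nonneg (Nat.cast_nonneg m) hx]
    have h5 : (((m:ℚ)+1)*m) ≤ 2 * (c₁ * (m+1) + c₂ : ℚ) * (R:ℚ)^2 := by
      have hxR : x^2 * (R:ℚ)^2 = 1 := by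
        rw [hxdef]; field_simp
      calc (((m:ℚ)+1)*m) = (((m:ℚ)+1)*m) * (x^2 * (R:ℚ)^2) := by rw [hxR]; ring
        _ = ((((m:ℚ)+1)*m) * x^2) * (R:ℚ)^2 := by ring
        _ ≤ (2 * (c₁ * (m+1) + c₂ : ℚ)) * (R:ℚ)^2 := by
            refine mul_le_mul_of_nonneg_right h4 (by positivity)
    exact_mod_cast h5
  -- contradiction with a large m
  set m := 2 * R^2 * (c₁ + c₂) + 1 with hm
  have hkey := key m
  have e1 : (m+1)*m = 2*c₁*(m+1)*R^2 + 2*c₂*R^2*(m+1) + (m+1) := by rw [hm]; ring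
  have e2 : 2*(c₁*(m+1)+c₂)*R^2 = 2*c₁*(m+1)*R^2 + 2*c₂*R^2 := by ring
  have e3 : 2*c₂*R^2 ≤ 2*c₂*R^2*(m+1) := Nat.le_mul_of_pos_right _ (by omega)
  rw [e1, e2] at hkey
  have h9 : 2*c₁*(m+1)*R^2 + 2*c₂*R^2 + (m+1) ≤ 2*c₁*(m+1)*R^2 + 2*c₂*R^2 := by
    calc 2*c₁*(m+1)*R^2 + 2*c₂*R^2 + (m+1)
        ≤ 2*c₁*(m+1)*R^2 + 2*c₂*R^2*(m+1) + (m+1) :=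
          Nat.add_le_add_right (Nat.add_le_add_left e3 _) _
      _ ≤ 2*c₁*(m+1)*R^2 + 2*c₂*R^2 := hkey
  exact absurd h9 (Nat.not_le.2 (Nat.lt_add_of_pos_right (Nat.succ_pos m)))



end GMRAux

open GMRAux in
/-- Gyarmati–Matolcsi–Ruzsa: for finite nonempty subsets `A, B₁, …, B_k` of an
abelian group and any `D ⊆ B₁ + ⋯ + B_k`, `|A+D|^k ≤ |D|^{k-1} · ∏ᵢ |A+Bᵢ|`. -/
theorem sumset_singleton_cover {G : Type*} [AddCommGroup G] [DecidableEq G] {k : ℕ}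
    (A : Finset G) (hA : A.Nonempty) (B : Fin k → Finset G) (hB : ∀ i, (B i).Nonempty)
    (D : Finset G) (hD : D ⊆ ∑ i, B i) (hDne : D.Nonempty) :
    (A + D).card ^ k ≤ D.card ^ (k - 1) * ∏ i, (A + B i).card := by
  rcases Nat.eq_zero_or_pos k with rfl | hk
  · simp
  have hR1 : 1 ≤ #D ^ (k - 1) * ∏ i, #(A + B i) := by
    have h1 : 0 < #D := card_pos.2 hDne
    have h2 : ∀ i, 0 < #(A + B i) := fun i => card_pos.2 (hA.add (hB i))
    exact Nat.one_le_iff_ne_zero.2 (Nat.mul_ne_zero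
      (Nat.pos_iff_ne_zero.1 (pow_pos h1 _))
      (Nat.pos_iff_ne_zero.1 (Finset.prod_pos fun i _ => h2 i)))
  refine endgame (#(A + D) ^ k) (#D ^ (k - 1) * ∏ i, #(A + B i)) (k * k * #A) k hR1 ?_
  intro m hm
  calc (#(A + D) ^ k) ^ m = #(A + D) ^ (k * m) := by rw [← pow_mul]
    _ ≤ (#D ^ (k - 1) * ∏ i, #(A + B i)) ^ m * (k * (k * m * #A + 1)) :=
        tensor_bound hk A B D hD m hm
    _ = (#D ^ (k - 1) * ∏ i, #(A + B i)) ^ m * (k * k * #A * m + k) := by ring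
end

section
/- Let S, T, U be finite nonempty subsets of a (possibly non-abelian) group G. Then |S·T·U|^2 ≤ |S·T| · |T·U| · max_{t∈T} |S·t·U|. -/
open Finset Pointwise

private lemma four_mul_le_sq_add' (x y : ℕ) : 4 * (x * y) ≤ (x + y) ^ 2 := by
  zify
  nlinarith [sq_nonneg ((x : ℤ) - (y : ℤ))]

private lemma arith_step (a b α β γ δ M : ℕ) (ha : a ^ 2 ≤ α * γ * M)
    (hb1 : b ≤ β * δ) (hb2 : b ≤ M) :
    (a + b) ^ 2 ≤ (α + β) * (γ + δ) * M := by
  have hbb : b ^ 2 ≤ β * δ * M := by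
    rw [sq]
    exact Nat.mul_le_mul hb1 hb2
  have hab : 2 * (a * b) ≤ (α * δ + β * γ) * M := by
    have key : (2 * (a * b)) ^ 2 ≤ ((α * δ + β * γ) * M) ^ 2 := by
      calc (2 * (a * b)) ^ 2 = 4 * (a ^ 2 * b ^ 2) := by ring
        _ ≤ 4 * ((α * γ * M) * (β * δ * M)) := by
            exact Nat.mul_le_mul_left 4 (Nat.mul_le_mul ha hbb)
        _ = 4 * ((α * δ) * (β * γ)) * M ^ 2 := by ring
        _ ≤ (α * δ + β * γ) ^ 2 * M ^ 2 := by
            exact Nat.mul_le_mul_right _ (four_mul_le_sq_add' _ _)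
        _ = ((α * δ + β * γ) * M) ^ 2 := by ring
    exact (Nat.pow_le_pow_iff_left (n := 2) (by norm_num)).mp key
  calc (a + b) ^ 2 = a ^ 2 + (2 * (a * b) + b ^ 2) := by ring
    _ ≤ α * γ * M + ((α * δ + β * γ) * M + β * δ * M) :=
        Nat.add_le_add ha (Nat.add_le_add hab hbb)
    _ = (α + β) * (γ + δ) * M := by ring

private lemma triple_product_aux {G : Type*} [Group G] [DecidableEq G]
    (S U : Finset G) :
    ∀ (T : Finset G), T.Nonempty →
      (S * T * U).card ^ 2
        ≤ (S * T).card * (T * U).card * T.sup (fun t => (S * {t} * U).card) := by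
  intro T hT
  induction hT using Finset.Nonempty.cons_induction with
  | singleton t =>
      rw [Finset.sup_singleton]
      have hx : (S * {t} * U).card ≤ (S * {t}).card * ({t} * U).card := by
        calc (S * {t} * U).card ≤ (S * {t}).card * U.card := Finset.card_mul_le
          _ = (S * {t}).card * ({t} * U).card := by rw [Finset.card_singleton_mul]
      calc (S * {t} * U).card ^ 2 = (S * {t} * U).card * (S * {t} * U).card := sq _
        _ ≤ ((S * {t}).card * ({t} * U).card) * (S * {t} * U).card :=
            Nat.mul_le_mul hx le_rfl
  | cons t₀ T' h hT' IH =>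
      simp only [Finset.cons_eq_insert, Finset.insert_eq]
      set f : G → ℕ := fun t => (S * {t} * U).card with hf
      set M : ℕ := ({t₀} ∪ T').sup f with hM
      have hsupu : M = f t₀ ⊔ T'.sup f := by
        rw [hM, Finset.sup_union, Finset.sup_singleton]
      have hft₀ : f t₀ ≤ M := by rw [hsupu]; exact le_sup_left
      have hsupT' : T'.sup f ≤ M := by rw [hsupu]; exact le_sup_right
      -- abbreviations
      set a : ℕ := (S * T' * U).card with hadef
      set b : ℕ := ((S * {t₀} * U) \ (S * T' * U)).card with hbdef
      set α : ℕ := (S * T').card with hαdef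
      set β : ℕ := ((S * {t₀}) \ (S * T')).card with hβdef
      set γ : ℕ := (T' * U).card with hγdef
      set δ : ℕ := (({t₀} * U) \ (T' * U)).card with hδdef
      -- set identities
      have hE1 : S * ({t₀} ∪ T') = (S * {t₀}) ∪ (S * T') := Finset.mul_union
      have hE2 : ({t₀} ∪ T') * U = ({t₀} * U) ∪ (T' * U) := Finset.union_mul
      have hE3 : S * ({t₀} ∪ T') * U = (S * {t₀} * U) ∪ (S * T' * U) := by
        rw [hE1, Finset.union_mul]
      -- cardinalities
      have hcard1 : (S * ({t₀} ∪ T') * U).card ≤ a + b := by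
        rw [hE3]
        have h1 := Finset.card_sdiff_add_card (S * {t₀} * U) (S * T' * U)
        omega
      have hcardα : (S * ({t₀} ∪ T')).card = β + α := by
        rw [hE1]
        have h1 := Finset.card_sdiff_add_card (S * {t₀}) (S * T')
        omega
      have hcardγ : (({t₀} ∪ T') * U).card = δ + γ := by
        rw [hE2]
        have h1 := Finset.card_sdiff_add_card ({t₀} * U) (T' * U)
        omega
      -- induction hypothesis
      have ha : a ^ 2 ≤ α * γ * M :=
        le_trans (IH) (Nat.mul_le_mul_left _ hsupT')
      -- b ≤ β * δ via the injection x = s t₀ u ↦ (s t₀, t₀ u)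
      have hsub : (S * {t₀} * U) \ (S * T' * U) ⊆
          Finset.image (fun pq : G × G => pq.1 * t₀⁻¹ * pq.2)
            (((S * {t₀}) \ (S * T')) ×ˢ (({t₀} * U) \ (T' * U))) := by
        intro x hx
        rw [Finset.mem_sdiff] at hx
        obtain ⟨hx1, hx2⟩ := hx
        obtain ⟨p, hp, u, hu, rfl⟩ := Finset.mem_mul.mp hx1
        have hpA : p ∉ S * T' := fun hpa => hx2 (Finset.mul_mem_mul hpa hu)
        obtain ⟨s, hs', w, hw, rfl⟩ := Finset.mem_mul.mp hp
        rw [Finset.mem_singleton] at hw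
        subst w
        have hqB : t₀ * u ∉ T' * U := by
          intro hq
          apply hx2
          have h2 : s * (t₀ * u) ∈ S * (T' * U) := Finset.mul_mem_mul hs' hq
          rwa [← mul_assoc, ← mul_assoc] at h2
        refine Finset.mem_image.mpr ⟨(s * t₀, t₀ * u), Finset.mem_product.mpr
          ⟨Finset.mem_sdiff.mpr ⟨hp, hpA⟩,
           Finset.mem_sdiff.mpr ⟨Finset.mul_mem_mul (Finset.mem_singleton_self t₀) hu, hqB⟩⟩, ?_⟩
        group
      have hb1 : b ≤ β * δ := by
        calc b ≤ (Finset.image (fun pq : G × G => pq.1 * t₀⁻¹ * pq.2)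
            (((S * {t₀}) \ (S * T')) ×ˢ (({t₀} * U) \ (T' * U)))).card :=
              Finset.card_le_card hsub
          _ ≤ ((((S * {t₀}) \ (S * T'))) ×ˢ (({t₀} * U) \ (T' * U))).card :=
              Finset.card_image_le
          _ = β * δ := Finset.card_product _ _
      have hb2 : b ≤ M := by
        calc b ≤ (S * {t₀} * U).card := Finset.card_le_card (Finset.sdiff_subset)
          _ = f t₀ := rfl
          _ ≤ M := hft₀
      calc (S * ({t₀} ∪ T') * U).card ^ 2 ≤ (a + b) ^ 2 :=
            Nat.pow_le_pow_left hcard1 2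
        _ ≤ (α + β) * (γ + δ) * M := arith_step a b α β γ δ M ha hb1 hb2
        _ = (β + α) * (δ + γ) * M := by ring
        _ = (S * ({t₀} ∪ T')).card * (({t₀} ∪ T') * U).card * M := by
            rw [hcardα, hcardγ]

/-- Ruzsa's triangle-type inequality in a (possibly non-abelian) group:
`|S·T·U|² ≤ |S·T| · |T·U| · max_{t∈T} |S·t·U|`. -/
theorem nonabelian_triple_product {G : Type*} [Group G] [DecidableEq G]
    (S T U : Finset G) (hS : S.Nonempty) (hT : T.Nonempty) (hU : U.Nonempty) :
    (S * T * U).card ^ 2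
      ≤ (S * T).card * (T * U).card * T.sup (fun t => (S * {t} * U).card) := by
  exact triple_product_aux S U T hT
end

section
/- Let X1,…,Xn be finite nonempty subsets of some set, let f be a function of n arguments admitting well-defined restrictions f_s to subsets s of arguments such that f is partition-determined with respect to a collection C of subsets of [n] (i.e., for each s ∈ C, the values f_s(x) and f_{s̄}(x) jointly determine f(x)). If α is a fractional covering of [n] using C, then |f(X1,…,Xn)| ≤ ∏_{s∈C} |f_s(X_{i}: i∈s)|^{α_s}, where f(X1,…,Xn) = {f(x1,…,xn) : xi ∈ Xi}. -/
open Finset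


lemma my_holder {ι τ : Type*} (D : Finset ι) (T : Finset τ) (w : ι → ℝ) (g : ι → τ → ℝ)
    (hw : ∀ s ∈ D, 0 ≤ w s) (hw1 : ∑ s ∈ D, w s = 1)
    (hg : ∀ s ∈ D, ∀ t ∈ T, 0 < g s t) (hT : T.Nonempty) :
    ∑ t ∈ T, ∏ s ∈ D, g s t ^ w s ≤ ∏ s ∈ D, (∑ t ∈ T, g s t) ^ w s := by
  set S : ι → ℝ := fun s => ∑ t ∈ T, g s t with hS
  have hSpos : ∀ s ∈ D, 0 < S s := fun s hs => Finset.sum_pos (fun t ht => hg s hs t ht) hT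
  have hSnn : 0 ≤ ∏ s ∈ D, S s ^ w s :=
    Finset.prod_nonneg fun s hs => Real.rpow_nonneg (hSpos s hs).le _
  have key : ∀ t ∈ T, ∏ s ∈ D, g s t ^ w s
      ≤ (∏ s ∈ D, S s ^ w s) * ∑ s ∈ D, w s * (g s t / S s) := by
    intro t ht
    have h1 : ∏ s ∈ D, g s t ^ w s
        = (∏ s ∈ D, S s ^ w s) * ∏ s ∈ D, (g s t / S s) ^ w s := by
      rw [← Finset.prod_mul_distrib]
      refine Finset.prod_congr rfl fun s hs => ?_
      rw [← Real.mul_rpow (hSpos s hs).le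
        (div_nonneg (hg s hs t ht).le (hSpos s hs).le),
        mul_div_cancel₀ _ (hSpos s hs).ne']
    rw [h1]
    refine mul_le_mul_of_nonneg_left ?_ hSnn
    exact Real.geom_mean_le_arith_mean_weighted D w (fun s => g s t / S s) hw hw1
      (fun s hs => div_nonneg (hg s hs t ht).le (hSpos s hs).le)
  calc ∑ t ∈ T, ∏ s ∈ D, g s t ^ w s
      ≤ ∑ t ∈ T, (∏ s ∈ D, S s ^ w s) * ∑ s ∈ D, w s * (g s t / S s) :=
        Finset.sum_le_sum key
    _ = (∏ s ∈ D, S s ^ w s) * ∑ t ∈ T, ∑ s ∈ D, w s * (g s t / S s) := by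
        rw [Finset.mul_sum]
    _ = (∏ s ∈ D, S s ^ w s) * ∑ s ∈ D, w s * (S s / S s) := by
        rw [Finset.sum_comm]
        congr 1
        refine Finset.sum_congr rfl fun s hs => ?_
        simp only [div_eq_mul_inv, ← Finset.mul_sum, ← Finset.sum_mul, hS]
    _ = ∏ s ∈ D, S s ^ w s := by
        have : ∑ s ∈ D, w s * (S s / S s) = 1 := by
          rw [← hw1]
          exact Finset.sum_congr rfl fun s hs => by
            rw [div_self (hSpos s hs).ne', mul_one]
        rw [this, mul_one]

lemma analytic_step {ι τ : Type*} (Cc : Finset ι) (p : ι → Prop) [DecidablePred p]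
    (T : Finset τ) (hT : T.Nonempty) (α : ι → ℝ) (hα : ∀ s ∈ Cc, 0 ≤ α s)
    (hγ : 1 ≤ ∑ s ∈ Cc.filter p, α s)
    (A : ι → τ → ℝ) (N : ι → ℝ)
    (hA1 : ∀ s ∈ Cc, ∀ t ∈ T, 1 ≤ A s t)
    (hAN : ∀ s ∈ Cc, ¬ p s → ∀ t ∈ T, A s t ≤ N s)
    (hsum : ∀ s ∈ Cc, p s → ∑ t ∈ T, A s t ≤ N s) :
    ∑ t ∈ T, ∏ s ∈ Cc, A s t ^ α s ≤ ∏ s ∈ Cc, N s ^ α s := by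
  classical
  set D := Cc.filter p with hD
  set γ := ∑ s ∈ D, α s with hγdef
  have hγ0 : 0 < γ := lt_of_lt_of_le one_pos hγ
  have hApos : ∀ s ∈ Cc, ∀ t ∈ T, 0 < A s t := fun s hs t ht =>
    lt_of_lt_of_le one_pos (hA1 s hs t ht)
  have hAN' : ∀ s ∈ Cc, p s → ∀ t ∈ T, A s t ≤ N s := by
    intro s hs hps t ht
    calc A s t ≤ ∑ t' ∈ T, A s t' :=
          Finset.single_le_sum (fun t' ht' => (hApos s hs t' ht').le) ht
      _ ≤ N s := hsum s hs hps
  have hANall : ∀ s ∈ Cc, ∀ t ∈ T, A s t ≤ N s := by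
    intro s hs t ht
    by_cases hps : p s
    · exact hAN' s hs hps t ht
    · exact hAN s hs hps t ht
  obtain ⟨t0, ht0⟩ := hT
  have hNpos : ∀ s ∈ Cc, 0 < N s := fun s hs =>
    lt_of_lt_of_le (hApos s hs t0 ht0) (hANall s hs t0 ht0)
  have hexp : ∀ s ∈ D, 0 ≤ α s - α s / γ := by
    intro s hs
    have hsC : s ∈ Cc := Finset.mem_of_mem_filter s hs
    have := div_le_self (hα s hsC) hγ
    linarith
  -- pointwise bound
  have key : ∀ t ∈ T, ∏ s ∈ Cc, A s t ^ α s
      ≤ ((∏ s ∈ Cc.filter fun s => ¬ p s, N s ^ α s) * ∏ s ∈ D, N s ^ (α s - α s / γ))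
        * ∏ s ∈ D, A s t ^ (α s / γ) := by
    intro t ht
    rw [← Finset.prod_filter_mul_prod_filter_not Cc p]
    have h1 : ∏ s ∈ Cc.filter (fun s => ¬ p s), A s t ^ α s
        ≤ ∏ s ∈ Cc.filter (fun s => ¬ p s), N s ^ α s := by
      refine Finset.prod_le_prod (fun s hs => Real.rpow_nonneg
        (hApos s (Finset.mem_of_mem_filter s hs) t ht).le _) (fun s hs => ?_)
      obtain ⟨hsC, hnp⟩ := Finset.mem_filter.mp hs
      exact Real.rpow_le_rpow (hApos s hsC t ht).le (hAN s hsC hnp t ht) (hα s hsC)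
    have h2 : ∏ s ∈ D, A s t ^ α s
        ≤ (∏ s ∈ D, N s ^ (α s - α s / γ)) * ∏ s ∈ D, A s t ^ (α s / γ) := by
      rw [← Finset.prod_mul_distrib]
      refine Finset.prod_le_prod (fun s hs => Real.rpow_nonneg
        (hApos s (Finset.mem_of_mem_filter s hs) t ht).le _) (fun s hs => ?_)
      have hsC : s ∈ Cc := Finset.mem_of_mem_filter s hs
      have : A s t ^ α s = A s t ^ (α s - α s / γ) * A s t ^ (α s / γ) := by
        rw [← Real.rpow_add (hApos s hsC t ht), sub_add_cancel]
      rw [this]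
      refine mul_le_mul_of_nonneg_right ?_ (Real.rpow_nonneg (hApos s hsC t ht).le _)
      exact Real.rpow_le_rpow (hApos s hsC t ht).le (hANall s hsC t ht) (hexp s hs)
    calc (∏ s ∈ D, A s t ^ α s) * ∏ s ∈ Cc.filter (fun s => ¬ p s), A s t ^ α s
        ≤ ((∏ s ∈ D, N s ^ (α s - α s / γ)) * ∏ s ∈ D, A s t ^ (α s / γ))
          * ∏ s ∈ Cc.filter (fun s => ¬ p s), N s ^ α s := by
          refine mul_le_mul h2 h1 (Finset.prod_nonneg fun s hs => Real.rpow_nonneg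
            (hApos s (Finset.mem_of_mem_filter s hs) t ht).le _) ?_
          refine mul_nonneg (Finset.prod_nonneg fun s hs => Real.rpow_nonneg
            (hNpos s (Finset.mem_of_mem_filter s hs)).le _)
            (Finset.prod_nonneg fun s hs => Real.rpow_nonneg
            (hApos s (Finset.mem_of_mem_filter s hs) t ht).le _)
      _ = ((∏ s ∈ Cc.filter fun s => ¬ p s, N s ^ α s) * ∏ s ∈ D, N s ^ (α s - α s / γ))
          * ∏ s ∈ D, A s t ^ (α s / γ) := by ring
  -- sum up
  have hsum2 : ∑ t ∈ T, ∏ s ∈ D, A s t ^ (α s / γ)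
      ≤ ∏ s ∈ D, N s ^ (α s / γ) := by
    have hw : ∀ s ∈ D, 0 ≤ α s / γ := fun s hs =>
      div_nonneg (hα s (Finset.mem_of_mem_filter s hs)) hγ0.le
    have hw1 : ∑ s ∈ D, α s / γ = 1 := by
      rw [← Finset.sum_div, ← hγdef, div_self hγ0.ne']
    calc ∑ t ∈ T, ∏ s ∈ D, A s t ^ (α s / γ)
        ≤ ∏ s ∈ D, (∑ t ∈ T, A s t) ^ (α s / γ) :=
          my_holder D T _ _ hw hw1
            (fun s hs t ht => hApos s (Finset.mem_of_mem_filter s hs) t ht) ⟨t0, ht0⟩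
      _ ≤ ∏ s ∈ D, N s ^ (α s / γ) := by
          refine Finset.prod_le_prod (fun s hs => Real.rpow_nonneg
            (Finset.sum_nonneg fun t ht =>
              (hApos s (Finset.mem_of_mem_filter s hs) t ht).le) _) (fun s hs => ?_)
          exact Real.rpow_le_rpow (Finset.sum_nonneg fun t ht =>
            (hApos s (Finset.mem_of_mem_filter s hs) t ht).le)
            (hsum s (Finset.mem_of_mem_filter s hs) (Finset.mem_filter.mp hs).2)
            (hw s hs)
  have hconst : 0 ≤ (∏ s ∈ Cc.filter fun s => ¬ p s, N s ^ α s)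
      * ∏ s ∈ D, N s ^ (α s - α s / γ) := by
    refine mul_nonneg (Finset.prod_nonneg fun s hs => Real.rpow_nonneg
      (hNpos s (Finset.mem_of_mem_filter s hs)).le _)
      (Finset.prod_nonneg fun s hs => Real.rpow_nonneg
      (hNpos s (Finset.mem_of_mem_filter s hs)).le _)
  calc ∑ t ∈ T, ∏ s ∈ Cc, A s t ^ α s
      ≤ ∑ t ∈ T, ((∏ s ∈ Cc.filter fun s => ¬ p s, N s ^ α s)
          * ∏ s ∈ D, N s ^ (α s - α s / γ)) * ∏ s ∈ D, A s t ^ (α s / γ) :=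
        Finset.sum_le_sum key
    _ = ((∏ s ∈ Cc.filter fun s => ¬ p s, N s ^ α s)
          * ∏ s ∈ D, N s ^ (α s - α s / γ)) * ∑ t ∈ T, ∏ s ∈ D, A s t ^ (α s / γ) := by
        rw [Finset.mul_sum]
    _ ≤ ((∏ s ∈ Cc.filter fun s => ¬ p s, N s ^ α s)
          * ∏ s ∈ D, N s ^ (α s - α s / γ)) * ∏ s ∈ D, N s ^ (α s / γ) :=
        mul_le_mul_of_nonneg_left hsum2 hconst
    _ = (∏ s ∈ Cc.filter fun s => ¬ p s, N s ^ α s) * ∏ s ∈ D, N s ^ α s := by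
        rw [mul_assoc, ← Finset.prod_mul_distrib]
        congr 1
        refine Finset.prod_congr rfl fun s hs => ?_
        rw [← Real.rpow_add (hNpos s (Finset.mem_of_mem_filter s hs)), sub_add_cancel]
    _ = ∏ s ∈ Cc, N s ^ α s := by
        rw [mul_comm, Finset.prod_filter_mul_prod_filter_not Cc p]

/-- Restriction of a tuple to a subset of coordinates, with `none` outside. -/
def restrOpt {n : ℕ} {β : Type*} [DecidableEq β] (v : Finset (Fin n)) (x : Fin n → β) :
    Fin n → Option β :=
  fun i => if i ∈ v then some (x i) else none

lemma shearer_proj {n : ℕ} {β : Type*} [DecidableEq β]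
    (C : Finset (Finset (Fin n))) (α : Finset (Fin n) → ℝ) (hα : ∀ s ∈ C, 0 ≤ α s)
    (u : Finset (Fin n)) :
    ∀ (R : Finset ((Fin n) → β)),
      (∀ i ∈ u, 1 ≤ ∑ s ∈ C.filter (fun s => i ∈ s), α s) →
      (∀ x ∈ R, ∀ y ∈ R, (∀ i ∈ u, x i = y i) → x = y) →
      (R.card : ℝ) ≤ ∏ s ∈ C, ((R.image (restrOpt (s ∩ u))).card : ℝ) ^ α s := by
  classical
  induction u using Finset.induction_on with
  | empty =>
    intro R _ hdet
    rcases R.eq_empty_or_nonempty with rfl | ⟨x0, hx0⟩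
    · simp only [Finset.card_empty, Nat.cast_zero]
      exact Finset.prod_nonneg fun s _ => Real.rpow_nonneg (Nat.cast_nonneg _) _
    · have hR : R = {x0} := Finset.eq_singleton_iff_unique_mem.mpr
        ⟨hx0, fun y hy => hdet y hy x0 hx0 (fun i hi => absurd hi (Finset.notMem_empty i))⟩
      subst hR
      simp [Real.one_rpow]
  | @insert j u hj ih =>
    intro R hcov hdet
    rcases R.eq_empty_or_nonempty with rfl | hR
    · simp only [Finset.card_empty, Nat.cast_zero]
      exact Finset.prod_nonneg fun s _ => Real.rpow_nonneg (Nat.cast_nonneg _) _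
    set T := R.image (fun x => x j) with hTdef
    have hT : T.Nonempty := hR.image _
    set Rt : β → Finset (Fin n → β) := fun t => R.filter (fun x => x j = t) with hRt
    have hfib : R.card = ∑ t ∈ T, (Rt t).card :=
      Finset.card_eq_sum_card_fiberwise (fun x hx => Finset.mem_image_of_mem _ hx)
    have hRtne : ∀ t ∈ T, (Rt t).Nonempty := by
      intro t ht
      obtain ⟨x, hx, rfl⟩ := Finset.mem_image.mp ht
      exact ⟨x, Finset.mem_filter.mpr ⟨hx, rfl⟩⟩
    -- IH applied to fibers
    have hIH : ∀ t ∈ T, ((Rt t).card : ℝ)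
        ≤ ∏ s ∈ C, (((Rt t).image (restrOpt (s ∩ u))).card : ℝ) ^ α s := by
      intro t ht
      refine ih (Rt t) (fun i hi => hcov i (Finset.mem_insert_of_mem hi)) ?_
      intro x hx y hy hagree
      obtain ⟨hxR, hxj⟩ := Finset.mem_filter.mp hx
      obtain ⟨hyR, hyj⟩ := Finset.mem_filter.mp hy
      refine hdet x hxR y hyR ?_
      intro i hi
      rcases Finset.mem_insert.mp hi with rfl | hi
      · rw [hxj, hyj]
      · exact hagree i hi
    -- counting estimates
    have hA1 : ∀ s ∈ C, ∀ t ∈ T, 1 ≤ (((Rt t).image (restrOpt (s ∩ u))).card : ℝ) := by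
      intro s _ t ht
      exact_mod_cast Nat.one_le_iff_ne_zero.mpr
        (Finset.card_ne_zero_of_mem (Finset.mem_image_of_mem _ ((hRtne t ht).choose_spec)))
    have hAN : ∀ s ∈ C, j ∉ s → ∀ t ∈ T,
        (((Rt t).image (restrOpt (s ∩ u))).card : ℝ)
          ≤ ((R.image (restrOpt (s ∩ insert j u))).card : ℝ) := by
      intro s _ hjs t _
      have hins : s ∩ insert j u = s ∩ u := by
        ext i
        simp only [Finset.mem_inter, Finset.mem_insert]
        constructor
        · rintro ⟨his, rfl | hiu⟩
          · exact absurd his hjs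
          · exact ⟨his, hiu⟩
        · rintro ⟨his, hiu⟩; exact ⟨his, Or.inr hiu⟩
      rw [hins]
      exact_mod_cast Finset.card_le_card
        (Finset.image_subset_image (Finset.filter_subset _ R))
    have hsum : ∀ s ∈ C, j ∈ s →
        ∑ t ∈ T, (((Rt t).image (restrOpt (s ∩ u))).card : ℝ)
          ≤ ((R.image (restrOpt (s ∩ insert j u))).card : ℝ) := by
      intro s _ hjs
      have hjnotin : j ∉ s ∩ u := by simp [hj]
      have hins : s ∩ insert j u = insert j (s ∩ u) := by
        ext i
        simp only [Finset.mem_inter, Finset.mem_insert]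
        constructor
        · rintro ⟨his, rfl | hiu⟩
          · exact Or.inl rfl
          · exact Or.inr ⟨his, hiu⟩
        · rintro (rfl | ⟨his, hiu⟩)
          · exact ⟨hjs, Or.inl rfl⟩
          · exact ⟨his, Or.inr hiu⟩
      set e : β → Finset (Fin n → Option β) := fun t =>
        ((Rt t).image (restrOpt (s ∩ u))).image
          (fun v => Function.update v j (some t)) with he
      have hvj : ∀ t, ∀ v ∈ (Rt t).image (restrOpt (s ∩ u)), v j = none := by
        intro t v hv
        obtain ⟨x, _, rfl⟩ := Finset.mem_image.mp hv
        simp [restrOpt, hjnotin]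
      have hcard_e : ∀ t ∈ T, (e t).card = ((Rt t).image (restrOpt (s ∩ u))).card := by
        intro t _
        refine Finset.card_image_of_injOn ?_
        intro v hv w hw hvw
        funext i
        by_cases hij : i = j
        · subst hij
          rw [hvj t v hv, hvj t w hw]
        · have h3 := congrFun hvw i
          simp only [Function.update_of_ne hij] at h3
          exact h3
      have he_sub : ∀ t ∈ T, e t ⊆ R.image (restrOpt (s ∩ insert j u)) := by
        intro t ht z hz
        obtain ⟨v, hv, rfl⟩ := Finset.mem_image.mp hz
        obtain ⟨x, hx, rfl⟩ := Finset.mem_image.mp hv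
        obtain ⟨hxR, hxj⟩ := Finset.mem_filter.mp hx
        refine Finset.mem_image.mpr ⟨x, hxR, ?_⟩
        funext i
        by_cases hij : i = j
        · subst hij
          rw [Function.update_self]
          have : i ∈ s ∩ insert i u := Finset.mem_inter.mpr ⟨hjs, Finset.mem_insert_self i u⟩
          simp [restrOpt, this, hxj]
        · rw [Function.update_of_ne hij]
          have : i ∈ s ∩ u ↔ i ∈ s ∩ insert j u := by
            rw [hins, Finset.mem_insert]
            exact ⟨Or.inr, fun h => h.resolve_left hij⟩
          simp only [restrOpt]
          by_cases hisu : i ∈ s ∩ u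
          · rw [if_pos hisu, if_pos (this.mp hisu)]
          · rw [if_neg hisu, if_neg (fun h => hisu (this.mpr h))]
      have hdisj : ∀ t ∈ T, ∀ t' ∈ T, t ≠ t' → Disjoint (e t) (e t') := by
        intro t _ t' _ htt'
        rw [Finset.disjoint_left]
        intro z hz hz'
        obtain ⟨v, hv, rfl⟩ := Finset.mem_image.mp hz
        obtain ⟨w, hw, hweq⟩ := Finset.mem_image.mp hz'
        have h1 : Function.update v j (some t) j = some t := Function.update_self _ _ _
        have h2 : Function.update w j (some t') j = some t' := Function.update_self _ _ _
        rw [hweq] at h2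
        rw [h1] at h2
        exact htt' (Option.some.inj h2)
      calc ∑ t ∈ T, (((Rt t).image (restrOpt (s ∩ u))).card : ℝ)
          = ((∑ t ∈ T, (e t).card : ℕ) : ℝ) := by
            push_cast
            exact Finset.sum_congr rfl fun t ht => by rw [hcard_e t ht]
        _ = (((T.biUnion e).card : ℕ) : ℝ) := by
            rw [Finset.card_biUnion hdisj]
        _ ≤ ((R.image (restrOpt (s ∩ insert j u))).card : ℝ) := by
            exact_mod_cast Finset.card_le_card (Finset.biUnion_subset.mpr he_sub)
    calc (R.card : ℝ) = ∑ t ∈ T, ((Rt t).card : ℝ) := by exact_mod_cast hfib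
      _ ≤ ∑ t ∈ T, ∏ s ∈ C, (((Rt t).image (restrOpt (s ∩ u))).card : ℝ) ^ α s :=
          Finset.sum_le_sum hIH
      _ ≤ ∏ s ∈ C, ((R.image (restrOpt (s ∩ insert j u))).card : ℝ) ^ α s := by
          exact analytic_step C (fun s => j ∈ s) T hT α hα
            (hcov j (Finset.mem_insert_self j u))
            (fun s t => (((Rt t).image (restrOpt (s ∩ u))).card : ℝ))
            (fun s => ((R.image (restrOpt (s ∩ insert j u))).card : ℝ))
            hA1 hAN hsum

lemma card_image_le_of_factor {σ γ δ : Type*} [DecidableEq γ] [DecidableEq δ]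
    (R : Finset σ) (g : σ → γ) (h : σ → δ)
    (hf : ∀ x ∈ R, ∀ y ∈ R, h x = h y → g x = g y) :
    (R.image g).card ≤ (R.image h).card := by
  classical
  rcases R.eq_empty_or_nonempty with rfl | ⟨x0, hx0⟩
  · simp
  · set ψ : δ → γ := fun v => if hv : ∃ x, x ∈ R ∧ h x = v then g hv.choose else g x0 with hψ
    have hsub : R.image g ⊆ (R.image h).image ψ := by
      intro b hb
      obtain ⟨x, hx, rfl⟩ := Finset.mem_image.mp hb
      refine Finset.mem_image.mpr ⟨h x, Finset.mem_image_of_mem _ hx, ?_⟩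
      have hex : ∃ x', x' ∈ R ∧ h x' = h x := ⟨x, hx, rfl⟩
      simp only [hψ, dif_pos hex]
      exact hf hex.choose hex.choose_spec.1 x hx hex.choose_spec.2
    exact (Finset.card_le_card hsub).trans Finset.card_image_le

/-- Fractional-covering cardinality bound for compound sets built from a
partition-determined function.  Here `F s x` is the restriction `f_s` of `f`
evaluated on the coordinates of `x` in `s` (so it may depend only on those
coordinates), `f = F univ`, and `f` is partition-determined with respect to the
collection `C`: for `s ∈ C`, the values `f_s(x)` and `f_{sᶜ}(x)` determine `f(x)`.
If `α` is a fractional covering of `[n]` using `C`, then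
`|f(X₁,…,X_n)| ≤ ∏_{s∈C} |f_s(X_i : i ∈ s)|^{α_s}`. -/
theorem compound_set_fractional_covering {n : ℕ} {β V : Type*} [DecidableEq β] [DecidableEq V]
    (X : Fin n → Finset β) (hX : ∀ i, (X i).Nonempty)
    (F : Finset (Fin n) → (Fin n → β) → V)
    (hrestr : ∀ (s : Finset (Fin n)) (x y : Fin n → β),
      (∀ i ∈ s, x i = y i) → F s x = F s y)
    (C : Finset (Finset (Fin n)))
    (hpd : ∀ s ∈ C, ∀ x y : Fin n → β, (∀ i, x i ∈ X i) → (∀ i, y i ∈ X i) →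
      F s x = F s y → F sᶜ x = F sᶜ y → F Finset.univ x = F Finset.univ y)
    (α : Finset (Fin n) → ℝ) (hα : ∀ s ∈ C, 0 ≤ α s)
    (hcov : ∀ i : Fin n, 1 ≤ ∑ s ∈ C.filter (fun s => i ∈ s), α s) :
    (((Fintype.piFinset X).image (F Finset.univ)).card : ℝ)
      ≤ ∏ s ∈ C, (((Fintype.piFinset X).image (F s)).card : ℝ) ^ α s := by
  classical
  set box := Fintype.piFinset X with hbox
  set A := box.image (F Finset.univ) with hA
  -- the finite family of valid representative sets
  set S : Finset (Finset (Fin n → β)) := box.powerset.filter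
    (fun R => R.image (F Finset.univ) = A ∧
      ∀ x ∈ R, ∀ y ∈ R, F Finset.univ x = F Finset.univ y → x = y) with hSdef
  -- a first representative set
  have hrep : ∀ a ∈ A, ∃ x, x ∈ box ∧ F Finset.univ x = a := by
    intro a ha
    obtain ⟨x, hx, hxa⟩ := Finset.mem_image.mp ha
    exact ⟨x, hx, hxa⟩
  choose rep hrepmem hrepval using hrep
  have hSne : S.Nonempty := by
    refine ⟨A.attach.image (fun a => rep a.1 a.2), Finset.mem_filter.mpr ⟨?_, ?_, ?_⟩⟩
    · refine Finset.mem_powerset.mpr ?_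
      intro x hx
      obtain ⟨a, _, rfl⟩ := Finset.mem_image.mp hx
      exact hrepmem a.1 a.2
    · ext b
      constructor
      · intro hb
        obtain ⟨x, hx, rfl⟩ := Finset.mem_image.mp hb
        obtain ⟨a, _, rfl⟩ := Finset.mem_image.mp hx
        rw [hrepval a.1 a.2]; exact a.2
      · intro hb
        refine Finset.mem_image.mpr ⟨rep b hb, ?_, hrepval b hb⟩
        exact Finset.mem_image_of_mem _ (Finset.mem_attach A ⟨b, hb⟩)
    · intro x hx y hy hxy
      obtain ⟨a, _, rfl⟩ := Finset.mem_image.mp hx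
      obtain ⟨b, _, rfl⟩ := Finset.mem_image.mp hy
      rw [hrepval a.1 a.2, hrepval b.1 b.2] at hxy
      obtain ⟨a, ha2⟩ := a
      obtain ⟨b, hb2⟩ := b
      subst hxy
      rfl
  -- rank function on the relevant elements
  set B : Finset β := Finset.univ.biUnion X with hB
  set r : β → ℕ := fun b => if h : b ∈ B then (B.equivFin ⟨b, h⟩ : ℕ) else 0 with hr
  have hXB : ∀ (i : Fin n), ∀ b ∈ X i, b ∈ B := fun i b hb =>
    Finset.mem_biUnion.mpr ⟨i, Finset.mem_univ i, hb⟩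
  have hrinj : ∀ b1 ∈ B, ∀ b2 ∈ B, r b1 = r b2 → b1 = b2 := by
    intro b1 h1 b2 h2 hr12
    simp only [hr, dif_pos h1, dif_pos h2] at hr12
    have h3 : (⟨b1, h1⟩ : {x // x ∈ B}) = ⟨b2, h2⟩ :=
      B.equivFin.injective (Fin.val_injective hr12)
    exact congrArg Subtype.val h3
  -- lexicographic potential
  letI : LinearOrder (Lex (∀ _ : Fin n, ℕ)) :=
    @linearOrderOfSTO (Lex (∀ _ : Fin n, ℕ)) (· < ·)
      { trichotomous := (Pi.isTrichotomous_lex _ _ IsWellFounded.wf).1 } (Classical.decRel _)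
  set φ : Finset (Fin n → β) → Lex (∀ _ : Fin n, ℕ) :=
    fun R => toLex (fun i => ∑ x ∈ R, r (x i)) with hφ
  obtain ⟨R, hRS, hRmin⟩ := S.exists_min_image φ hSne
  obtain ⟨hRpow, hRim, hRinj⟩ := Finset.mem_filter.mp hRS
  have hRsub : R ⊆ box := Finset.mem_powerset.mp hRpow
  have hRboxmem : ∀ x ∈ R, ∀ i, x i ∈ X i := fun x hx i =>
    Fintype.mem_piFinset.mp (hRsub hx) i
  -- compression property at the minimum
  have hcomp : ∀ s ∈ C, ∀ x ∈ R, ∀ y ∈ R, F s x = F s y → ∀ i ∈ s, x i = y i := by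
    intro s hs
    by_contra hnot
    push_neg at hnot
    obtain ⟨x, hx, y, hy, hFxy, i1, hi1s, hne1⟩ := hnot
    set sf := s.filter (fun i => x i ≠ y i) with hsf
    have hsfne : sf.Nonempty := ⟨i1, Finset.mem_filter.mpr ⟨hi1s, hne1⟩⟩
    set i0 := sf.min' hsfne with hi0def
    have hi0mem := sf.min'_mem hsfne
    obtain ⟨hi0s, hi0ne⟩ := Finset.mem_filter.mp hi0mem
    have hpre : ∀ i ∈ s, i < i0 → x i = y i := by
      intro i his hlt
      by_contra hne'
      exact absurd (sf.min'_le i (Finset.mem_filter.mpr ⟨his, hne'⟩)) (not_le.mpr hlt)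
    have swapF : ∀ x' y', x' ∈ R → y' ∈ R → F s x' = F s y' →
        (∀ i ∈ s, i < i0 → x' i = y' i) → r (x' i0) < r (y' i0) → False := by
      intro x' y' hx' hy' hFxy' hpre' hlt
      have hx'box : ∀ i, x' i ∈ X i := hRboxmem x' hx'
      have hy'box : ∀ i, y' i ∈ X i := hRboxmem y' hy'
      set z : Fin n → β := fun i => if i ∈ s then x' i else y' i with hz
      have hzbox : ∀ i, z i ∈ X i := by
        intro i
        by_cases his : i ∈ s
        · simp only [hz, if_pos his]; exact hx'box i
        · simp only [hz, if_neg his]; exact hy'box i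
      have hFsz : F s z = F s x' := hrestr s z x' (fun i hi => by simp [hz, if_pos hi])
      have hFscz : F sᶜ z = F sᶜ y' :=
        hrestr sᶜ z y' (fun i hi => by simp [hz, if_neg (Finset.mem_compl.mp hi)])
      have hFz : F Finset.univ z = F Finset.univ y' :=
        hpd s hs z y' hzbox hy'box (hFsz.trans hFxy') hFscz
      have hxyne : x' i0 ≠ y' i0 := fun h => hlt.ne (congrArg r h)
      have hzy : z ≠ y' := by
        intro h
        have := congrFun h i0
        rw [hz] at this
        simp only [if_pos hi0s] at this
        rw [if_pos hi0s] at this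
        exact hxyne this
      have hzR : z ∉ R := by
        intro hzmem
        exact hzy (hRinj z hzmem y' hy' hFz)
      have hzer : z ∉ R.erase y' := fun h => hzR (Finset.mem_of_mem_erase h)
      set R' := insert z (R.erase y') with hR'
      have hR'S : R' ∈ S := by
        refine Finset.mem_filter.mpr ⟨Finset.mem_powerset.mpr ?_, ?_, ?_⟩
        · intro w hw
          rcases Finset.mem_insert.mp hw with rfl | hw'
          · exact Fintype.mem_piFinset.mpr hzbox
          · exact hRsub (Finset.mem_of_mem_erase hw')
        · have h1 : R.image (F Finset.univ)
              = insert (F Finset.univ y') ((R.erase y').image (F Finset.univ)) := by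
            conv_lhs => rw [← Finset.insert_erase hy']
            rw [Finset.image_insert]
          rw [hR', Finset.image_insert, hFz, ← h1, hRim]
        · intro a ha b hb hab
          rcases Finset.mem_insert.mp ha with rfl | ha' <;>
            rcases Finset.mem_insert.mp hb with h | hb'
          · rw [h]
          · rw [hFz] at hab
            exact absurd (hRinj y' hy' b (Finset.mem_of_mem_erase hb') hab).symm
              (Finset.ne_of_mem_erase hb')
          · subst h
            rw [hFz] at hab
            exact absurd (hRinj a (Finset.mem_of_mem_erase ha') y' hy' hab)
              (Finset.ne_of_mem_erase ha')
          · exact hRinj a (Finset.mem_of_mem_erase ha') b (Finset.mem_of_mem_erase hb') hab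
      have hsumR' : ∀ i, ∑ w ∈ R', r (w i) = r (z i) + ∑ w ∈ R.erase y', r (w i) :=
        fun i => Finset.sum_insert hzer
      have hsumR : ∀ i, ∑ w ∈ R, r (w i) = r (y' i) + ∑ w ∈ R.erase y', r (w i) :=
        fun i => (Finset.add_sum_erase R _ hy').symm
      have hφlt : φ R' < φ R := by
        refine ⟨i0, ?_, ?_⟩
        · intro k hk
          show ∑ w ∈ R', r (w k) = ∑ w ∈ R, r (w k)
          rw [hsumR' k, hsumR k]
          congr 1
          by_cases hks : k ∈ s
          · simp only [hz, if_pos hks]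
            rw [hpre' k hks hk]
          · simp only [hz, if_neg hks]
        · show ∑ w ∈ R', r (w i0) < ∑ w ∈ R, r (w i0)
          rw [hsumR' i0, hsumR i0]
          refine Nat.add_lt_add_right ?_ _
          simp only [hz, if_pos hi0s]
          rw [if_pos hi0s]
          exact hlt
      exact (show φ R ≤ φ R' from hRmin R' hR'S).not_gt hφlt
    rcases lt_trichotomy (r (x i0)) (r (y i0)) with hlt | heq | hgt
    · exact swapF x y hx hy hFxy hpre hlt
    · exact hi0ne (hrinj _ (hXB i0 _ (hRboxmem x hx i0)) _ (hXB i0 _ (hRboxmem y hy i0)) heq)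
    · exact swapF y x hy hx hFxy.symm (fun i his hl => (hpre i his hl).symm) hgt
  -- assembly
  have hcardA : A.card = R.card := by
    rw [← hRim]
    exact Finset.card_image_of_injOn (fun a ha b hb hab =>
      hRinj a (Finset.mem_coe.mp ha) b (Finset.mem_coe.mp hb) hab)
  have hShear := shearer_proj C α hα Finset.univ R (fun i _ => hcov i)
    (fun x _ y _ h => funext fun i => h i (Finset.mem_univ i))
  simp only [Finset.inter_univ] at hShear
  have hface : ∀ s ∈ C,
      (R.image (restrOpt s)).card ≤ ((Fintype.piFinset X).image (F s)).card := by
    intro s hs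
    calc (R.image (restrOpt s)).card ≤ (R.image (F s)).card := by
          refine card_image_le_of_factor R _ _ (fun x hx y hy h => funext fun i => ?_)
          by_cases his : i ∈ s
          · simp only [restrOpt, if_pos his]
            rw [hcomp s hs x hx y hy h i his]
          · simp only [restrOpt, if_neg his]
      _ ≤ ((Fintype.piFinset X).image (F s)).card :=
          Finset.card_le_card (Finset.image_subset_image hRsub)
  calc (A.card : ℝ) = (R.card : ℝ) := by exact_mod_cast hcardA
    _ ≤ ∏ s ∈ C, ((R.image (restrOpt s)).card : ℝ) ^ α s := hShear
    _ ≤ ∏ s ∈ C, (((Fintype.piFinset X).image (F s)).card : ℝ) ^ α s := by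
        refine Finset.prod_le_prod (fun s _ => Real.rpow_nonneg (Nat.cast_nonneg _) _)
          (fun s hs => ?_)
        exact Real.rpow_le_rpow (Nat.cast_nonneg _)
          (by exact_mod_cast hface s hs) (hα s hs)
end
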